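/- Let H be a finite-dimensional Hopf algebra acting on an H-module algebra A with left integral Λ, and B = A#H. If there exists an element x ∈ A with Λ·x = 1, then the identity map of A factors through λ_A : A → A ⊗ H, a ↦ a ⊗ Λ; concretely, the B-module map r : A ⊗ H → A, a ⊗ h ↦ (h₍₂₎·(S⁻¹(h₍₁₎)·a · x)) satisfies r(a ⊗ Λ) = a for all a ∈ A. In particular A is a direct summand of A ⊗ H as a B-module. -/

import Mathlib

open TensorProduct

noncomputable section

namespace Hopfological

variable (k : Type*) [Field k]

/-- The scalar action of a `k`-algebra `R` on a module `M`, as a `k`-bilinear map. -/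
def actL (R M : Type*) [Ring R] [Algebra k R] [AddCommGroup M] [Module k M]
    [Module R M] [IsScalarTower k R M] [SMulCommClass k R M] :
    R →ₗ[k] M →ₗ[k] M :=
  LinearMap.mk₂ k (· • ·) (fun r r' m => add_smul r r' m) (fun c r m => smul_assoc c r m)
    (fun r m m' => smul_add r m m') (fun c r m => (smul_comm c r m).symm)

@[simp] lemma actL_apply (R M : Type*) [Ring R] [Algebra k R] [AddCommGroup M] [Module k M]
    [Module R M] [IsScalarTower k R M] [SMulCommClass k R M] (r : R) (m : M) :
    actL k R M r m = r • m := rfl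

variable (H : Type*) [Ring H] [HopfAlgebra k H]

/-- The diagonal (Sweedler) action of `H` on a tensor product, built from two given
`k`-linear actions `ρM`, `ρN`:  `h • (m ⊗ n) = ∑ ρM h₁ m ⊗ ρN h₂ n`. -/
def tenActVia {M N : Type*} [AddCommGroup M] [Module k M] [AddCommGroup N] [Module k N]
    (ρM : H →ₗ[k] M →ₗ[k] M) (ρN : H →ₗ[k] N →ₗ[k] N) :
    H →ₗ[k] (M ⊗[k] N) →ₗ[k] (M ⊗[k] N) :=
  (TensorProduct.lift (((TensorProduct.mapBilinear (σ₁₂ := RingHom.id k) (M := M) (N := N) (M₂ := M) (N₂ := N)).comp ρM).compl₂ ρN)).comp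
    (Coalgebra.comul (R := k))

/-- The conjugation (Sweedler) action of `H` on `k`-linear maps:
`(h • f) m = ∑ ρN h₂ (f (ρM (S⁻¹ h₁) m))`. -/
def conjAct (Sinv : H →ₗ[k] H) {M N : Type*} [AddCommGroup M] [Module k M]
    [AddCommGroup N] [Module k N]
    (ρM : H →ₗ[k] M →ₗ[k] M) (ρN : H →ₗ[k] N →ₗ[k] N) :
    H →ₗ[k] (M →ₗ[k] N) →ₗ[k] (M →ₗ[k] N) :=
  (TensorProduct.lift (LinearMap.mk₂ k
      (fun h₁ h₂ => (LinearMap.llcomp k M N N (ρN h₂)).comp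
        (LinearMap.lcomp k N (ρM (Sinv h₁))))
      (fun h₁ h₁' h₂ => by ext f m; simp)
      (fun c h₁ h₂ => by ext f m; simp)
      (fun h₁ h₂ h₂' => by ext f m; simp)
      (fun c h₁ h₂ => by ext f m; simp))).comp (Coalgebra.comul (R := k))

/-- `A` is a left `H`-module algebra with respect to the action `ρ`. -/
def IsModuleAlgebraVia (A : Type*) [Ring A] [Algebra k A]
    (ρ : H →ₗ[k] A →ₗ[k] A) : Prop :=
  (∀ (h h' : H) (a : A), ρ (h * h') a = ρ h (ρ h' a)) ∧
  (∀ a : A, ρ 1 a = a) ∧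
  (∀ (h : H) (a b : A),
    ρ h (a * b) = LinearMap.mul' k A (tenActVia k H ρ ρ h (a ⊗ₜ[k] b))) ∧
  (∀ h : H, ρ h 1 = Coalgebra.counit (R := k) h • (1 : A))

/-- `M` is a module over the smash product `A#H`: the `H`- and `A`-actions satisfy
`h • (a • m) = ∑ (h₁ • a) • (h₂ • m)`. -/
def IsSmashModule (A M : Type*) [Ring A] [Algebra k A] [AddCommGroup M] [Module k M]
    [Module A M] [IsScalarTower k A M] [SMulCommClass k A M]
    [Module H A] [IsScalarTower k H A] [SMulCommClass k H A]
    [Module H M] [IsScalarTower k H M] [SMulCommClass k H M] : Prop :=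
  ∀ (h : H) (a : A) (m : M),
    h • (a • m) =
      TensorProduct.lift
        (LinearMap.mk₂ k (· • ·) (fun a a' m => add_smul a a' m)
          (fun c a m => smul_assoc c a m) (fun a m m' => smul_add a m m')
          (fun c a m => (smul_comm c a m).symm))
        (tenActVia k H (actL k H A) (actL k H M) h (a ⊗ₜ[k] m))


variable (A : Type*) [Ring A] [Algebra k A]
  [Module H A] [IsScalarTower k H A] [SMulCommClass k H A]

/-- The retraction `r : A ⊗ H → A`, `a ⊗ h ↦ ∑ h₂ • ((S⁻¹(h₁) • a) * x)`, obtained from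
right multiplication by `x`. -/
def retrMap (Sinv : H →ₗ[k] H) (x : A) : A ⊗[k] H →ₗ[k] A :=
  TensorProduct.lift
    ((TensorProduct.lift
        (LinearMap.mk₂ k
          (fun h₁ h₂ =>
            (actL k H A h₂) ∘ₗ (LinearMap.mulRight k x) ∘ₗ (actL k H A (Sinv h₁)))
          (fun h₁ h₁' h₂ => by ext a; simp [add_mul])
          (fun c h₁ h₂ => by ext a; simp [smul_mul_assoc])
          (fun h₁ h₂ h₂' => by ext a; simp)
          (fun c h₁ h₂ => by ext a; simp)) ∘ₗ (Coalgebra.comul (R := k))).flip)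

/-! ### Auxiliary Sweedler-calculus lemmas -/

section Aux

open Coalgebra HopfAlgebra

lemma sum_counit_smul_left {ι : Type*} {h : H} (r : Coalgebra.Repr k h ι) :
    ∑ i ∈ r.index, Coalgebra.counit (R := k) (r.right i) • r.left i = h := by
  have h2 := congrArg (TensorProduct.rid k H) (Coalgebra.sum_tmul_counit_eq r)
  rw [map_sum] at h2
  simp only [TensorProduct.rid_tmul] at h2
  rwa [one_smul] at h2

lemma sum_counit_smul_right {ι : Type*} {h : H} (r : Coalgebra.Repr k h ι) :
    ∑ i ∈ r.index, Coalgebra.counit (R := k) (r.left i) • r.right i = h := by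
  have h2 := congrArg (TensorProduct.lid k H) (Coalgebra.sum_counit_tmul_eq r)
  rw [map_sum] at h2
  simp only [TensorProduct.lid_tmul] at h2
  rwa [one_smul] at h2

/-- A representation of `comul (g * h)` built from representations of `comul g`, `comul h`. -/
def reprMul {ι κ : Type*} {g h : H} (rg : Coalgebra.Repr k g ι) (rh : Coalgebra.Repr k h κ) :
    Coalgebra.Repr k (g * h) (ι × κ) where
  index := rg.index ×ˢ rh.index
  left := fun p => rg.left p.1 * rh.left p.2
  right := fun p => rg.right p.1 * rh.right p.2
  eq := by
    rw [Finset.sum_product, Bialgebra.comul_mul, ← rg.eq, ← rh.eq, Finset.sum_mul_sum]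
    simp [Algebra.TensorProduct.tmul_mul_tmul]

/-- The fundamental "cancellation in the middle" lemma: if a bilinear `θ` contracts any
representation of `comul` to `ε ⬝ 1`, then contracting the first two legs of `Δ²` with `θ`
gives `1 ⊗ g`. -/
lemma sum_theta_tmul (θ : H →ₗ[k] H →ₗ[k] H)
    (hθ : ∀ h : H, ∑ i ∈ (ℛ k h).index,
      θ ((ℛ k h).left i) ((ℛ k h).right i) = Coalgebra.counit (R := k) h • (1 : H))
    {ι κ : Type*} {g : H} (rg : Coalgebra.Repr k g ι) (a₂ : ∀ i : rg.ι, Coalgebra.Repr k (rg.right i) κ) :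
    ∑ i ∈ rg.index, ∑ p ∈ (a₂ i).index,
      θ (rg.left i) ((a₂ i).left p) ⊗ₜ[k] (a₂ i).right p = (1 : H) ⊗ₜ[k] g := by
  classical
  have coas := Coalgebra.sum_tmul_tmul_eq rg (fun i => ℛ k (rg.left i)) a₂
  set Φ : H ⊗[k] (H ⊗[k] H) →ₗ[k] H ⊗[k] H :=
    (LinearMap.rTensor H (TensorProduct.lift θ)) ∘ₗ
      (TensorProduct.assoc k H H H).symm.toLinearMap with hΦdef
  have hΦ : ∀ u v w : H, Φ (u ⊗ₜ[k] (v ⊗ₜ[k] w)) = θ u v ⊗ₜ[k] w := by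
    intro u v w; simp [hΦdef]
  have key := congrArg Φ coas
  simp only [map_sum, hΦ] at key
  rw [← key]
  have e : ∀ i ∈ rg.index,
      ∑ j ∈ (ℛ k (rg.left i)).index,
        θ ((ℛ k (rg.left i)).left j) ((ℛ k (rg.left i)).right j) ⊗ₜ[k] rg.right i
        = (1 : H) ⊗ₜ[k] (Coalgebra.counit (R := k) (rg.left i) • rg.right i) := by
    intro i _
    rw [← TensorProduct.sum_tmul, hθ (rg.left i), TensorProduct.smul_tmul]
  rw [Finset.sum_congr rfl e, ← TensorProduct.tmul_sum, sum_counit_smul_right k H rg]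

/-- `sum_theta_tmul` composed with an arbitrary bilinear map `F`. -/
lemma sum_theta_bilin {M : Type*} [AddCommGroup M] [Module k M]
    (θ : H →ₗ[k] H →ₗ[k] H)
    (hθ : ∀ h : H, ∑ i ∈ (ℛ k h).index,
      θ ((ℛ k h).left i) ((ℛ k h).right i) = Coalgebra.counit (R := k) h • (1 : H))
    {ι κ : Type*} {g : H} (rg : Coalgebra.Repr k g ι) (a₂ : ∀ i : rg.ι, Coalgebra.Repr k (rg.right i) κ)
    (F : H →ₗ[k] H →ₗ[k] M) :
    ∑ i ∈ rg.index, ∑ p ∈ (a₂ i).index,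
      F (θ (rg.left i) ((a₂ i).left p)) ((a₂ i).right p) = F 1 g := by
  have h2 := congrArg (TensorProduct.lift F) (sum_theta_tmul k H θ hθ rg a₂)
  simpa [map_sum] using h2

/-- The antipode is anti-multiplicative. -/
lemma antipode_mul_rev (g h : H) :
    HopfAlgebra.antipode (R := k) (g * h)
      = HopfAlgebra.antipode (R := k) h * HopfAlgebra.antipode (R := k) g := by
  classical
  set S : H →ₗ[k] H := HopfAlgebra.antipode (R := k) with hSdef
  set rg := ℛ k g with hrg
  set rh := ℛ k h with hrh
  set rg2 : ∀ i : rg.ι, Coalgebra.Repr k (rg.right i) (H × H) := fun i => ℛ k (rg.right i) with hrg2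
  set rh2 : ∀ j : rh.ι, Coalgebra.Repr k (rh.right j) (H × H) := fun j => ℛ k (rh.right j) with hrh2
  set θ : H →ₗ[k] H →ₗ[k] H := LinearMap.mk₂ k (fun u v => S u * v)
    (fun u u' v => by simp [add_mul]) (fun c u v => by simp [smul_mul_assoc])
    (fun u v v' => by simp [mul_add]) (fun c u v => by simp [mul_smul_comm]) with hθdef
  have hθ : ∀ a : H, ∑ i ∈ (ℛ k a).index,
      θ ((ℛ k a).left i) ((ℛ k a).right i) = Coalgebra.counit (R := k) a • (1 : H) := by
    intro a
    simpa [hθdef] using HopfAlgebra.sum_antipode_mul_eq_smul (ℛ k a)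
  -- Step 1: expand `S h * S g` using counit laws.
  have e1 : S h * S g
      = ∑ j ∈ rh.index, ∑ i ∈ rg.index,
          (S (rh.left j) * S (rg.left i)) *
            ((Coalgebra.counit (R := k) (rg.right i)
              * Coalgebra.counit (R := k) (rh.right j)) • (1 : H)) := by
    conv_lhs => rw [← sum_counit_smul_left k H rh, ← sum_counit_smul_left k H rg]
    rw [map_sum, map_sum, Finset.sum_mul_sum]
    refine Finset.sum_congr rfl fun j _ => Finset.sum_congr rfl fun i _ => ?_
    rw [map_smul, map_smul]
    simp [smul_mul_assoc, mul_smul_comm, smul_smul, mul_comm]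
  -- Step 2: re-expand the counit product via the antipode axiom for `g₂ᵢ * h₂ⱼ`.
  have e2 : ∀ (j : rh.ι) (i : rg.ι),
      ((Coalgebra.counit (R := k) (rg.right i)
          * Coalgebra.counit (R := k) (rh.right j)) • (1 : H))
        = ∑ p ∈ (rg2 i).index, ∑ q ∈ (rh2 j).index,
            ((rg2 i).left p * (rh2 j).left q) * S ((rg2 i).right p * (rh2 j).right q) := by
    intro j i
    rw [← Bialgebra.counit_mul,
      ← HopfAlgebra.sum_mul_antipode_eq_smul (reprMul k H (rg2 i) (rh2 j)),
      reprMul, Finset.sum_product]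
  -- Step 3: for fixed `j`, contract the `g`-legs.
  have e3 : ∀ j : rh.ι,
      ∑ i ∈ rg.index, ∑ p ∈ (rg2 i).index,
        (∑ q ∈ (rh2 j).index,
          (S (rh.left j) * (θ (rg.left i) ((rg2 i).left p)) * (rh2 j).left q)
            * S ((rg2 i).right p * (rh2 j).right q))
      = ∑ q ∈ (rh2 j).index,
          (S (rh.left j) * 1 * (rh2 j).left q) * S (g * (rh2 j).right q) := by
    intro j
    set F : H →ₗ[k] H →ₗ[k] H := LinearMap.mk₂ k
      (fun u w => ∑ q ∈ (rh2 j).index,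
        (S (rh.left j) * u * (rh2 j).left q) * S (w * (rh2 j).right q))
      (fun u u' w => by simp [mul_add, add_mul, Finset.sum_add_distrib])
      (fun c u w => by simp [mul_smul_comm, smul_mul_assoc, Finset.smul_sum])
      (fun u w w' => by simp [add_mul, mul_add, Finset.sum_add_distrib])
      (fun c u w => by simp [mul_smul_comm, smul_mul_assoc, Finset.smul_sum]) with hFdef
    have := sum_theta_bilin k H θ hθ rg rg2 F
    simpa [hFdef] using this
  -- Assemble.
  symm
  calc S h * S g
      = ∑ j ∈ rh.index, ∑ i ∈ rg.index, ∑ p ∈ (rg2 i).index, ∑ q ∈ (rh2 j).index,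
          (S (rh.left j) * (θ (rg.left i) ((rg2 i).left p)) * (rh2 j).left q)
            * S ((rg2 i).right p * (rh2 j).right q) := by
        rw [e1]
        refine Finset.sum_congr rfl fun j _ => Finset.sum_congr rfl fun i _ => ?_
        rw [e2 j i, Finset.mul_sum]
        refine Finset.sum_congr rfl fun p _ => ?_
        rw [Finset.mul_sum]
        refine Finset.sum_congr rfl fun q _ => ?_
        simp only [hθdef, LinearMap.mk₂_apply]
        noncomm_ring
    _ = ∑ j ∈ rh.index, ∑ q ∈ (rh2 j).index,
          (S (rh.left j) * 1 * (rh2 j).left q) * S (g * (rh2 j).right q) := by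
        exact Finset.sum_congr rfl fun j _ => e3 j
    _ = ∑ j ∈ rh.index, ∑ q ∈ (rh2 j).index,
          (LinearMap.mk₂ k (fun u w => u * S (g * w))
            (fun u u' w => by simp [add_mul])
            (fun c u w => by simp [smul_mul_assoc])
            (fun u w w' => by simp [mul_add])
            (fun c u w => by simp [mul_smul_comm]) : H →ₗ[k] H →ₗ[k] H)
            (θ (rh.left j) ((rh2 j).left q)) ((rh2 j).right q) := by
        refine Finset.sum_congr rfl fun j _ => Finset.sum_congr rfl fun q _ => ?_
        simp [hθdef, mul_one]
    _ = S (g * h) := by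
        rw [sum_theta_bilin k H θ hθ rh rh2]
        simp

lemma antipode_one' : HopfAlgebra.antipode (R := k) (1 : H) = 1 := by
  have h1 := HopfAlgebra.mul_antipode_rTensor_comul_apply (R := k) (1 : H)
  simpa [Bialgebra.comul_one, Algebra.TensorProduct.one_def] using h1

end Aux

section Aux2

open Coalgebra HopfAlgebra

variable {k H} (Sinv : H →ₗ[k] H)
  (hS₁ : ∀ h : H, Sinv (HopfAlgebra.antipode (R := k) h) = h)
  (hS₂ : ∀ h : H, HopfAlgebra.antipode (R := k) (Sinv h) = h)

include hS₁ hS₂ in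
lemma Sinv_mul (a b : H) : Sinv (a * b) = Sinv b * Sinv a := by
  have e : a * b = HopfAlgebra.antipode (R := k) (Sinv b * Sinv a) := by
    rw [antipode_mul_rev, hS₂, hS₂]
  rw [e, hS₁]

include hS₁ in
lemma Sinv_one : Sinv (1 : H) = 1 := by
  conv_lhs => rw [← antipode_one' k H]
  exact hS₁ 1

include hS₁ hS₂ in
/-- `∑ h₂ S⁻¹(h₁) = ε(h) 1`. -/
lemma sum_mul_Sinv_eq_smul {ι : Type*} {g : H} (r : Coalgebra.Repr k g ι) :
    ∑ i ∈ r.index, r.right i * Sinv (r.left i)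
      = Coalgebra.counit (R := k) g • (1 : H) := by
  have h1 := congrArg Sinv (HopfAlgebra.sum_mul_antipode_eq_smul (R := k) r)
  rw [map_sum, map_smul, Sinv_one Sinv hS₁] at h1
  rw [← h1]
  refine Finset.sum_congr rfl fun i _ => ?_
  rw [Sinv_mul Sinv hS₁ hS₂, hS₁]

end Aux2

section Aux3

open Coalgebra

variable {k H A}

lemma retrMap_tmul (Sinv : H →ₗ[k] H) (x a : A) {ι : Type*} {h : H} (r : Coalgebra.Repr k h ι) :
    retrMap k H A Sinv x (a ⊗ₜ[k] h)
      = ∑ i ∈ r.index, r.right i • ((Sinv (r.left i) • a) * x) := by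
  have : retrMap k H A Sinv x (a ⊗ₜ[k] h)
      = (TensorProduct.lift (LinearMap.mk₂ k
          (fun h₁ h₂ =>
            (actL k H A h₂) ∘ₗ (LinearMap.mulRight k x) ∘ₗ (actL k H A (Sinv h₁)))
          (fun h₁ h₁' h₂ => by ext a; simp [add_mul])
          (fun c h₁ h₂ => by ext a; simp [smul_mul_assoc])
          (fun h₁ h₂ h₂' => by ext a; simp)
          (fun c h₁ h₂ => by ext a; simp)) (Coalgebra.comul (R := k) h)) a := rfl
  rw [this, ← r.eq, map_sum, LinearMap.sum_apply]
  simp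

lemma tenActVia_tmul {M N : Type*} [AddCommGroup M] [Module k M] [AddCommGroup N] [Module k N]
    (ρM : H →ₗ[k] M →ₗ[k] M) (ρN : H →ₗ[k] N →ₗ[k] N) {ι : Type*} {l : H} (r : Coalgebra.Repr k l ι)
    (m : M) (n : N) :
    tenActVia k H ρM ρN l (m ⊗ₜ[k] n)
      = ∑ i ∈ r.index, ρM (r.left i) m ⊗ₜ[k] ρN (r.right i) n := by
  have : tenActVia k H ρM ρN l (m ⊗ₜ[k] n)
      = (TensorProduct.lift (((TensorProduct.mapBilinear (σ₁₂ := RingHom.id k) (M := M) (N := N) (M₂ := M) (N₂ := N)).comp ρM).compl₂ ρN)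
          (Coalgebra.comul (R := k) l)) (m ⊗ₜ[k] n) := rfl
  rw [this, ← r.eq, map_sum, LinearMap.sum_apply]
  simp

lemma smul_mul_of_isModuleAlgebra (hA : IsModuleAlgebraVia k H A (actL k H A))
    {ι : Type*} {h : H} (r : Coalgebra.Repr k h ι) (u v : A) :
    h • (u * v) = ∑ i ∈ r.index, (r.left i • u) * (r.right i • v) := by
  have e := hA.2.2.1 h u v
  rw [actL_apply] at e
  rw [e, tenActVia_tmul (actL k H A) (actL k H A) r, map_sum]
  simp

/-- The key computation:  `r (a ⊗ h) = a * (h • x)`. -/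
lemma retrMap_eq_mul_smul (Sinv : H →ₗ[k] H)
    (hS₁ : ∀ h : H, Sinv (HopfAlgebra.antipode (R := k) h) = h)
    (hS₂ : ∀ h : H, HopfAlgebra.antipode (R := k) (Sinv h) = h)
    (hA : IsModuleAlgebraVia k H A (actL k H A))
    (x a : A) (h : H) :
    retrMap k H A Sinv x (a ⊗ₜ[k] h) = a * (h • x) := by
  classical
  set rh := ℛ k h with hrh
  set rh2 : ∀ i : rh.ι, Coalgebra.Repr k (rh.right i) (H × H) := fun i => ℛ k (rh.right i) with hrh2
  set θ : H →ₗ[k] H →ₗ[k] H := LinearMap.mk₂ k (fun u v => v * Sinv u)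
    (fun u u' v => by simp [mul_add])
    (fun c u v => by simp [mul_smul_comm])
    (fun u v v' => by simp [add_mul])
    (fun c u v => by simp [smul_mul_assoc]) with hθdef
  set F : H →ₗ[k] H →ₗ[k] A := LinearMap.mk₂ k (fun u w => (u • a) * (w • x))
    (fun u u' w => by simp [add_smul, add_mul])
    (fun c u w => by simp [smul_mul_assoc])
    (fun u w w' => by simp [add_smul, mul_add])
    (fun c u w => by simp [mul_smul_comm]) with hFdef
  have main := sum_theta_bilin k H θ
    (fun g => by
      simpa [hθdef] using sum_mul_Sinv_eq_smul Sinv hS₁ hS₂ (Coalgebra.Repr.arbitrary k g))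
    rh rh2 F
  rw [retrMap_tmul Sinv x a rh]
  calc ∑ i ∈ rh.index, rh.right i • ((Sinv (rh.left i) • a) * x)
      = ∑ i ∈ rh.index, ∑ p ∈ (rh2 i).index,
          F (θ (rh.left i) ((rh2 i).left p)) ((rh2 i).right p) := by
        refine Finset.sum_congr rfl fun i _ => ?_
        rw [smul_mul_of_isModuleAlgebra hA (rh2 i)]
        refine Finset.sum_congr rfl fun p _ => ?_
        simp only [hθdef, hFdef, LinearMap.mk₂_apply]
        rw [mul_smul]
    _ = F 1 h := main
    _ = a * (h • x) := by simp [hFdef]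

end Aux3

/-- If the left integral `Λ` of a finite-dimensional Hopf algebra `H`
acting on an `H`-module algebra `A` satisfies `Λ • x = 1` for some `x ∈ A`, then the
identity of `A` factors through `λ_A : A → A ⊗ H, a ↦ a ⊗ Λ`: the `B = A#H`-module map
`r : A ⊗ H → A`, `a ⊗ h ↦ ∑ h₂ • ((S⁻¹(h₁) • a) * x)`, satisfies `r (a ⊗ Λ) = a` for all
`a`.  In particular `A` is a `B`-module direct summand of `A ⊗ H`. -/
theorem retraction_of_integral_hits_one [FiniteDimensional k H]
    (Sinv : H →ₗ[k] H)
    (hS₁ : ∀ h : H, Sinv (HopfAlgebra.antipode (R := k) h) = h)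
    (hS₂ : ∀ h : H, HopfAlgebra.antipode (R := k) (Sinv h) = h)
    (hA : IsModuleAlgebraVia k H A (actL k H A))
    (Λ : H) (hΛ : ∀ h : H, h * Λ = Coalgebra.counit (R := k) h • Λ) (hΛ0 : Λ ≠ 0)
    (x : A) (hx : Λ • x = 1) :
    (∀ (b a : A) (h : H),
        retrMap k H A Sinv x ((b * a) ⊗ₜ[k] h) = b * retrMap k H A Sinv x (a ⊗ₜ[k] h)) ∧
    (∀ (l : H) (y : A ⊗[k] H),
        retrMap k H A Sinv x (tenActVia k H (actL k H A) (actL k H H) l y)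
          = l • retrMap k H A Sinv x y) ∧
    (∀ a : A, retrMap k H A Sinv x (a ⊗ₜ[k] Λ) = a) := by
  classical
  have key : ∀ (a : A) (h : H), retrMap k H A Sinv x (a ⊗ₜ[k] h) = a * (h • x) :=
    retrMap_eq_mul_smul Sinv hS₁ hS₂ hA x
  refine ⟨?_, ?_, ?_⟩
  · intro b a h
    rw [key, key, mul_assoc]
  · intro l y
    induction y using TensorProduct.induction_on with
    | zero => simp
    | tmul a h =>
        set rl := Coalgebra.Repr.arbitrary k l with hrl
        rw [tenActVia_tmul (actL k H A) (actL k H H) rl a h, map_sum]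
        have rhs : l • retrMap k H A Sinv x (a ⊗ₜ[k] h)
            = ∑ i ∈ rl.index, (rl.left i • a) * (rl.right i • (h • x)) := by
          rw [key, smul_mul_of_isModuleAlgebra hA rl]
        rw [rhs]
        refine Finset.sum_congr rfl fun i _ => ?_
        rw [actL_apply, actL_apply, key, smul_eq_mul, mul_smul]
    | add u v hu hv => simp only [map_add, hu, hv, smul_add]
  · intro a
    rw [key, hx, mul_one]

end Hopfological
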